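/- In a DAG G, every trek from a set I to a set J is incident to every choke point in C(I,J), and all treks from I to J pass through the choke points of C(I,J) in the same order. -/

import Mathlib

open MvPolynomial

/-- A directed acyclic graph on vertices `{0, …, n-1}`, numerically ordered:
`i → j` only if `i < j`. -/
structure DAG (n : ℕ) where
  edge : Fin n → Fin n → Bool
  increasing : ∀ i j, edge i j = true → i < j

namespace DAG

variable {n : ℕ}

/-- Indeterminates: `a_i` for each vertex (Sum.inl) and `λ_{kl}` for each
potential edge (Sum.inr). -/
abbrev Vars (n : ℕ) := Fin n ⊕ (Fin n × Fin n)

/-- `L` is the directed path from the top down to `i`, `R` from the top down to `j`;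
they share exactly the top vertex, and the resulting colliderless path is simple. -/
def IsTrek (G : DAG n) (i j : Fin n) (L R : List (Fin n)) : Prop :=
  L ≠ [] ∧ R ≠ [] ∧ L.head? = R.head? ∧ L.getLast? = some i ∧ R.getLast? = some j ∧
    L.Chain' (fun a b => G.edge a b = true) ∧ R.Chain' (fun a b => G.edge a b = true) ∧
    (L ++ R.tail).Nodup

/-- The type of treks from `i` to `j` in `G`. -/
def Trek (G : DAG n) (i j : Fin n) : Type :=
  {p : {l : List (Fin n) // l.Nodup} × {l : List (Fin n) // l.Nodup} //
    IsTrek G i j p.1.1 p.2.1}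

noncomputable instance (G : DAG n) (i j : Fin n) : Fintype (Trek G i j) := by
  classical exact Subtype.fintype _

def Trek.left {G : DAG n} {i j : Fin n} (P : Trek G i j) : List (Fin n) := P.1.1.1
def Trek.right {G : DAG n} {i j : Fin n} (P : Trek G i j) : List (Fin n) := P.1.2.1

/-- The topmost vertex of a trek. -/
def Trek.top {G : DAG n} {i j : Fin n} (P : Trek G i j) : Fin n := P.left.head?.getD i

/-- The consecutive pairs (directed edges) of a vertex list. -/
def pathEdges (l : List (Fin n)) : List (Fin n × Fin n) := l.zip l.tail

/-- The (directed) edges used by a trek. -/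
def Trek.edges {G : DAG n} {i j : Fin n} (P : Trek G i j) : List (Fin n × Fin n) :=
  pathEdges P.left ++ pathEdges P.right

/-- The monomial `a_{top(P)} · ∏_{k→l ∈ P} λ_{kl}` of a trek. -/
noncomputable def Trek.poly {G : DAG n} {i j : Fin n} (P : Trek G i j) :
    MvPolynomial (Vars n) ℂ :=
  X (Sum.inl P.top) * (P.edges.map (fun e => X (Sum.inr e))).prod

/-- The trek-rule polynomial `σ_{ij}(a,λ) = ∑_{P ∈ T(i,j)} a_{top(P)} ∏_{k→l∈P} λ_{kl}`. -/
noncomputable def trekPoly (G : DAG n) (i j : Fin n) : MvPolynomial (Vars n) ℂ :=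
  ∑ P : Trek G i j, P.poly

/-- The parent set `pa(j)` of a vertex. -/
def parents (G : DAG n) (j : Fin n) : Finset (Fin n) :=
  Finset.univ.filter (fun k => G.edge k j = true)

/-- Index set for the entries `σ_{ij}`, `1 ≤ i ≤ j ≤ n`, of a symmetric matrix. -/
abbrev SymIdx (n : ℕ) := {p : Fin n × Fin n // p.1 ≤ p.2}

/-- The variable index `σ_{ij}` (sorted). -/
def sIdx (i j : Fin n) : SymIdx n :=
  if h : i ≤ j then ⟨(i, j), h⟩ else ⟨(j, i), (le_total i j).resolve_left h⟩

/-- The trek-rule ring homomorphism `φ_G : ℂ[σ] → ℂ[a,λ]`. -/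
noncomputable def phi (G : DAG n) :
    MvPolynomial (SymIdx n) ℂ →ₐ[ℂ] MvPolynomial (Vars n) ℂ :=
  aeval (fun p => trekPoly G p.1.1 p.1.2)

/-- The vanishing ideal `I_G = ker φ_G` of the Gaussian Bayesian network of `G`. -/
noncomputable def gaussianIdeal (G : DAG n) : Ideal (MvPolynomial (SymIdx n) ℂ) :=
  RingHom.ker (phi G)

/-- The underlying undirected graph of `G`. -/
def underlying (G : DAG n) : SimpleGraph (Fin n) where
  Adj i j := G.edge i j = true ∨ G.edge j i = true
  symm := by
    constructor
    intro i j h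
    exact h.symm
  loopless := by
    constructor
    intro i h
    rcases h with h | h <;> exact absurd (G.increasing i i h) (lt_irrefl i)

/-- A polytree: a DAG whose underlying undirected graph is a tree. -/
def IsPolytree (G : DAG n) : Prop := G.underlying.IsTree

/-- `c` is a choke point between `I` and `J`: every trek from `I` to `J` contains `c`,
and `c` is on the `I`-side of every such trek, or on the `J`-side of every such trek. -/
def IsChokePoint (G : DAG n) (I J : Set (Fin n)) (c : Fin n) : Prop :=
  (∀ i ∈ I, ∀ j ∈ J, ∀ P : Trek G i j, c ∈ P.left) ∨
  (∀ i ∈ I, ∀ j ∈ J, ∀ P : Trek G i j, c ∈ P.right)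

/-- The induced subgraph on a vertex subset `S` (kept on the same vertex set). -/
def induce (G : DAG n) (S : Finset (Fin n)) : DAG n where
  edge i j := decide (G.edge i j = true ∧ i ∈ S ∧ j ∈ S)
  increasing := by
    intro i j h
    exact G.increasing i j (of_decide_eq_true h).1

/-- Indices `σ_{ij}` with both `i, j ∈ S`. -/
abbrev SubIdx (n : ℕ) (S : Finset (Fin n)) := {p : SymIdx n // p.1.1 ∈ S ∧ p.1.2 ∈ S}

/-- The trek-rule homomorphism restricted to the variables `σ_{ij}`, `i,j ∈ S`. -/
noncomputable def phiSub (G : DAG n) (S : Finset (Fin n)) :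
    MvPolynomial (SubIdx n S) ℂ →ₐ[ℂ] MvPolynomial (Vars n) ℂ :=
  aeval (fun p => trekPoly G p.1.1.1 p.1.1.2)

/-- The ideal `I_{G,S} = I_G ∩ ℂ[σ_{ij} : i,j ∈ S]` of the model with observed
variables `S` (the remaining variables hidden). -/
noncomputable def hiddenIdeal (G : DAG n) (S : Finset (Fin n)) :
    Ideal (MvPolynomial (SubIdx n S) ℂ) :=
  RingHom.ker (phiSub G S)

end DAG

open DAG in
/-- The trek as a single vertex sequence from `i` through the top to `j`. -/
def DAG.trekSeq {n : ℕ} {G : DAG n} {i j : Fin n} (P : Trek G i j) : List (Fin n) :=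
  P.left.reverse ++ P.right.tail

section ChokeAux

private lemma aux_sorted_lt {N : ℕ} {l : List (Fin N)} (h : l.Pairwise (· < ·)) {a b : Fin N}
    (ha : a ∈ l) (hb : b ∈ l) : l.idxOf a ≤ l.idxOf b ↔ a ≤ b := by
  have hm : StrictMono l.get := fun i j hij => h.rel_get_of_lt hij
  have hia : l.idxOf a < l.length := List.idxOf_lt_length_iff.2 ha
  have hib : l.idxOf b < l.length := List.idxOf_lt_length_iff.2 hb
  have hga : l.get ⟨l.idxOf a, hia⟩ = a := List.idxOf_get _
  have hgb : l.get ⟨l.idxOf b, hib⟩ = b := List.idxOf_get _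
  calc l.idxOf a ≤ l.idxOf b
      ↔ (⟨l.idxOf a, hia⟩ : Fin l.length) ≤ ⟨l.idxOf b, hib⟩ := (Fin.mk_le_mk).symm
    _ ↔ l.get ⟨l.idxOf a, hia⟩ ≤ l.get ⟨l.idxOf b, hib⟩ := hm.le_iff_le.symm
    _ ↔ a ≤ b := by rw [hga, hgb]

private lemma aux_sorted_gt {N : ℕ} {l : List (Fin N)} (h : l.Pairwise (· > ·)) {a b : Fin N}
    (ha : a ∈ l) (hb : b ∈ l) : l.idxOf a ≤ l.idxOf b ↔ b ≤ a := by
  have hm : StrictAnti l.get := fun i j hij => h.rel_get_of_lt hij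
  have hia : l.idxOf a < l.length := List.idxOf_lt_length_iff.2 ha
  have hib : l.idxOf b < l.length := List.idxOf_lt_length_iff.2 hb
  have hga : l.get ⟨l.idxOf a, hia⟩ = a := List.idxOf_get _
  have hgb : l.get ⟨l.idxOf b, hib⟩ = b := List.idxOf_get _
  calc l.idxOf a ≤ l.idxOf b
      ↔ (⟨l.idxOf a, hia⟩ : Fin l.length) ≤ ⟨l.idxOf b, hib⟩ := (Fin.mk_le_mk).symm
    _ ↔ l.get ⟨l.idxOf b, hib⟩ ≤ l.get ⟨l.idxOf a, hia⟩ := hm.le_iff_ge.symm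
    _ ↔ b ≤ a := by rw [hga, hgb]

variable {N : ℕ} {L R : List (Fin N)} {c : Fin N}

private lemma aux_memT (hR : R ≠ []) (hh : L.head? = R.head?) :
    (∀ c ∈ L, c ∈ L.reverse ++ R.tail) ∧ (∀ c ∈ R, c ∈ L.reverse ++ R.tail) := by
  have hhd : R.head hR ∈ L := by
    have : L.head? = some (R.head hR) := by rw [hh, List.head?_eq_head]
    exact List.mem_of_mem_head? (by rw [this]; exact rfl)
  constructor
  · intro c hc; exact List.mem_append_left _ (List.mem_reverse.2 hc)
  · intro c hc
    rw [← List.cons_head_tail hR, List.mem_cons] at hc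
    rcases hc with rfl | hc
    · exact List.mem_append_left _ (List.mem_reverse.2 hhd)
    · exact List.mem_append_right _ hc

private lemma aux_idxL (hc : c ∈ L) :
    (L.reverse ++ R.tail).idxOf c = L.reverse.idxOf c :=
  List.idxOf_append_of_mem (List.mem_reverse.2 hc)

private lemma aux_idxL_le (hc : c ∈ L) :
    (L.reverse ++ R.tail).idxOf c ≤ L.length - 1 := by
  rw [aux_idxL hc]
  have := List.idxOf_lt_length_iff.2 (List.mem_reverse.2 hc)
  rw [List.length_reverse] at this
  omega

private lemma aux_idxR (hL : L ≠ []) (hR : R ≠ []) (hh : L.head? = R.head?)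
    (hRnd : R.Nodup) (hnd : (L ++ R.tail).Nodup) (hLnd : L.Nodup) (hc : c ∈ R) :
    (L.reverse ++ R.tail).idxOf c = L.length - 1 + R.idxOf c := by
  have hdisj : L.Disjoint R.tail := List.disjoint_of_nodup_append hnd
  have hhd : R.head hR ∈ L := by
    have : L.head? = some (R.head hR) := by rw [hh, List.head?_eq_head]
    exact List.mem_of_mem_head? (by rw [this]; exact rfl)
  have hRc : R.head hR :: R.tail = R := List.cons_head_tail hR
  rw [← hRc, List.mem_cons] at hc
  have hLpos : 0 < L.length := List.length_pos_iff.2 hL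
  rcases hc with rfl | hc
  · have h0 : R.idxOf (R.head hR) = 0 := by
      have := List.idxOf_cons_self (a := R.head hR) (l := R.tail)
      rwa [hRc] at this
    rw [h0, aux_idxL hhd]
    have hrev : L.reverse.Nodup := List.nodup_reverse.2 hLnd
    have hmem := List.mem_reverse.2 hhd
    have hia : L.reverse.idxOf (R.head hR) < L.reverse.length :=
      List.idxOf_lt_length_iff.2 hmem
    have hga : L.reverse.get ⟨_, hia⟩ = R.head hR := List.idxOf_get _
    have hlen : L.length - 1 < L.reverse.length := by rw [List.length_reverse]; omega
    have hgb : L.reverse.get ⟨L.length - 1, hlen⟩ = R.head hR := by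
      have : L.reverse.get ⟨L.length - 1, hlen⟩ = L.reverse.getLast (by simp [hL]) := by
        rw [List.getLast_eq_getElem]
        congr 1
        simp [List.length_reverse]
      rw [this, List.getLast_reverse]
      have h1 : L.head? = some (R.head hR) := by rw [hh, List.head?_eq_head]
      have h2 : L.head? = some (L.head hL) := List.head?_eq_head hL
      rw [h2] at h1
      exact (Option.some.inj h1)
    have := hrev.get_inj_iff.1 (hga.trans hgb.symm)
    have := Fin.mk.inj_iff.1 this
    omega
  · have hcL : c ∉ L.reverse := by
      rw [List.mem_reverse]; intro hcl; exact hdisj hcl hc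
    rw [List.idxOf_append_of_notMem hcL]
    have hct : c ≠ R.head hR := by
      intro h; subst h
      have hnd2 : (R.head hR :: R.tail).Nodup := by rw [hRc]; exact hRnd
      exact (List.nodup_cons.1 hnd2).1 hc
    have : R.idxOf c = R.tail.idxOf c + 1 := by
      have h3 := List.idxOf_cons_ne (a := c) R.tail (Ne.symm hct)
      rw [hRc] at h3
      omega
    rw [List.length_reverse, this]
    omega

private lemma list_bundle {N : ℕ} {L R : List (Fin N)}
    (hL : L ≠ []) (hR : R ≠ []) (hh : L.head? = R.head?)
    (hLs : L.Pairwise (· < ·)) (hRs : R.Pairwise (· < ·)) (hnd : (L ++ R.tail).Nodup) :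
    (∀ c ∈ L, c ∈ L.reverse ++ R.tail) ∧ (∀ c ∈ R, c ∈ L.reverse ++ R.tail) ∧
    (∀ c₁ ∈ L, ∀ c₂ ∈ L,
      ((L.reverse ++ R.tail).idxOf c₁ ≤ (L.reverse ++ R.tail).idxOf c₂ ↔ c₂ ≤ c₁)) ∧
    (∀ c₁ ∈ R, ∀ c₂ ∈ R,
      ((L.reverse ++ R.tail).idxOf c₁ ≤ (L.reverse ++ R.tail).idxOf c₂ ↔ c₁ ≤ c₂)) ∧
    (∀ c₁ ∈ L, ∀ c₂ ∈ R,
      (L.reverse ++ R.tail).idxOf c₁ ≤ (L.reverse ++ R.tail).idxOf c₂) ∧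
    (∀ c₁ ∈ R, ∀ c₂ ∈ L,
      ((L.reverse ++ R.tail).idxOf c₁ ≤ (L.reverse ++ R.tail).idxOf c₂ ↔ c₁ = c₂)) := by
  have hLnd : L.Nodup := (List.nodup_append.1 hnd).1
  have hRnd : R.Nodup := hRs.nodup
  have hmem := aux_memT (L := L) hR hh
  have hLrs : L.reverse.Pairwise (· > ·) := List.pairwise_reverse.2 hLs
  have hLR : ∀ c₁ ∈ L, ∀ c₂ ∈ R,
      (L.reverse ++ R.tail).idxOf c₁ ≤ (L.reverse ++ R.tail).idxOf c₂ := by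
    intro c₁ h1 c₂ h2
    calc (L.reverse ++ R.tail).idxOf c₁ ≤ L.length - 1 := aux_idxL_le h1
      _ ≤ L.length - 1 + R.idxOf c₂ := Nat.le_add_right _ _
      _ = (L.reverse ++ R.tail).idxOf c₂ :=
          (aux_idxR hL hR hh hRnd hnd hLnd h2).symm
  refine ⟨hmem.1, hmem.2, ?_, ?_, hLR, ?_⟩
  · intro c₁ h1 c₂ h2
    rw [aux_idxL h1, aux_idxL h2]
    exact aux_sorted_gt hLrs (List.mem_reverse.2 h1) (List.mem_reverse.2 h2)
  · intro c₁ h1 c₂ h2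
    rw [aux_idxR hL hR hh hRnd hnd hLnd h1, aux_idxR hL hR hh hRnd hnd hLnd h2,
      Nat.add_le_add_iff_left]
    exact aux_sorted_lt hRs h1 h2
  · intro c₁ h1 c₂ h2
    constructor
    · intro hle
      have hge := hLR c₂ h2 c₁ h1
      have heq := le_antisymm hle hge
      exact (List.idxOf_inj (hmem.2 c₁ h1)).1 heq
    · rintro rfl; exact le_refl _

open DAG in
private lemma trek_bundle {n : ℕ} {G : DAG n} {i j : Fin n} (P : Trek G i j) :
    (∀ c ∈ P.left, c ∈ trekSeq P) ∧ (∀ c ∈ P.right, c ∈ trekSeq P) ∧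
    (∀ c₁ ∈ P.left, ∀ c₂ ∈ P.left,
      ((trekSeq P).idxOf c₁ ≤ (trekSeq P).idxOf c₂ ↔ c₂ ≤ c₁)) ∧
    (∀ c₁ ∈ P.right, ∀ c₂ ∈ P.right,
      ((trekSeq P).idxOf c₁ ≤ (trekSeq P).idxOf c₂ ↔ c₁ ≤ c₂)) ∧
    (∀ c₁ ∈ P.left, ∀ c₂ ∈ P.right,
      (trekSeq P).idxOf c₁ ≤ (trekSeq P).idxOf c₂) ∧
    (∀ c₁ ∈ P.right, ∀ c₂ ∈ P.left,
      ((trekSeq P).idxOf c₁ ≤ (trekSeq P).idxOf c₂ ↔ c₁ = c₂)) := by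
  obtain ⟨hL, hR, hh, -, -, hcL, hcR, hnd⟩ := P.2
  have hLs : List.Pairwise (· < ·) P.left :=
    List.isChain_iff_pairwise.1 (hcL.imp fun {a b} h => G.increasing a b h)
  have hRs : List.Pairwise (· < ·) P.right :=
    List.isChain_iff_pairwise.1 (hcR.imp fun {a b} h => G.increasing a b h)
  exact list_bundle hL hR hh hLs hRs hnd

end ChokeAux


open DAG in
/-- Every trek from `I` to `J` is incident to every choke point of `C(I,J)`, and all
treks from `I` to `J` reach the choke points in the same order. -/
theorem chokePoints_incident_and_same_order {n : ℕ} (G : DAG n) (I J : Set (Fin n))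
    (c₁ c₂ : Fin n) (h₁ : IsChokePoint G I J c₁) (h₂ : IsChokePoint G I J c₂) :
    (∀ i ∈ I, ∀ j ∈ J, ∀ P : Trek G i j, c₁ ∈ trekSeq P ∧ c₂ ∈ trekSeq P) ∧
    (∀ i ∈ I, ∀ j ∈ J, ∀ i' ∈ I, ∀ j' ∈ J, ∀ (P : Trek G i j) (Q : Trek G i' j'),
      ((trekSeq P).idxOf c₁ ≤ (trekSeq P).idxOf c₂ ↔
        (trekSeq Q).idxOf c₁ ≤ (trekSeq Q).idxOf c₂)) := by
  rcases h₁ with hA | hA <;> rcases h₂ with hB | hB <;>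
    refine ⟨fun i hi j hj P => ?_, fun i hi j hj i' hi' j' hj' P Q => ?_⟩
  · exact ⟨(trek_bundle P).1 c₁ (hA i hi j hj P), (trek_bundle P).1 c₂ (hB i hi j hj P)⟩
  · rw [(trek_bundle P).2.2.1 c₁ (hA i hi j hj P) c₂ (hB i hi j hj P),
      (trek_bundle Q).2.2.1 c₁ (hA i' hi' j' hj' Q) c₂ (hB i' hi' j' hj' Q)]
  · exact ⟨(trek_bundle P).1 c₁ (hA i hi j hj P), (trek_bundle P).2.1 c₂ (hB i hi j hj P)⟩
  · exact iff_of_true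
      ((trek_bundle P).2.2.2.2.1 c₁ (hA i hi j hj P) c₂ (hB i hi j hj P))
      ((trek_bundle Q).2.2.2.2.1 c₁ (hA i' hi' j' hj' Q) c₂ (hB i' hi' j' hj' Q))
  · exact ⟨(trek_bundle P).2.1 c₁ (hA i hi j hj P), (trek_bundle P).1 c₂ (hB i hi j hj P)⟩
  · rw [(trek_bundle P).2.2.2.2.2 c₁ (hA i hi j hj P) c₂ (hB i hi j hj P),
      (trek_bundle Q).2.2.2.2.2 c₁ (hA i' hi' j' hj' Q) c₂ (hB i' hi' j' hj' Q)]
  · exact ⟨(trek_bundle P).2.1 c₁ (hA i hi j hj P), (trek_bundle P).2.1 c₂ (hB i hi j hj P)⟩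
  · rw [(trek_bundle P).2.2.2.1 c₁ (hA i hi j hj P) c₂ (hB i hi j hj P),
      (trek_bundle Q).2.2.2.1 c₁ (hA i' hi' j' hj' Q) c₂ (hB i' hi' j' hj' Q)]
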